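/- Let n ≥ 1, let G and G̃ be Orlicz functions, and let α ≥ 0 and γ ≥ 1. Suppose that for all t ≥ 0 with G(t) ≤ 1 we have (i) G(t) ≤ G̃(t) and (ii) G̃(t/γ) ≤ α·G(t) + 1/n. Then for all x ∈ ℝⁿ with nonnegative coordinates, ‖x‖_G ≤ ‖x‖_{G̃} ≤ γ·(α+1)·‖x‖_G. -/

import Mathlib

noncomputable section

/-- An Orlicz function: continuous, convex and nondecreasing on `[0,∞)`, with `G 0 = 0` and
`G(t) → ∞` as `t → ∞`. -/
def IsOrliczFunction (G : ℝ → ℝ) : Prop :=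
  ContinuousOn G (Set.Ici 0) ∧ ConvexOn ℝ (Set.Ici 0) G ∧
  MonotoneOn G (Set.Ici 0) ∧ G 0 = 0 ∧
  Filter.Tendsto G Filter.atTop Filter.atTop

/-- The Orlicz norm generated by `G`: `inf {α > 0 : ∑ᵢ G (xᵢ/α) ≤ 1}`. -/
def orliczNorm {n : ℕ} (G : ℝ → ℝ) (x : Fin n → ℝ) : ℝ :=
  sInf {α : ℝ | 0 < α ∧ ∑ i, G (x i / α) ≤ 1}

lemma orlicz_nonneg {G : ℝ → ℝ} (hG : IsOrliczFunction G) {t : ℝ} (ht : 0 ≤ t) : 0 ≤ G t := by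
  have h := hG.2.2.1 Set.self_mem_Ici ht ht
  simpa [hG.2.2.2.1] using h

lemma orlicz_scale {G : ℝ → ℝ} (hG : IsOrliczFunction G) {s c : ℝ} (hs : 0 ≤ s)
    (hc0 : 0 ≤ c) (hc1 : c ≤ 1) : G (c * s) ≤ c * G s := by
  have h := hG.2.1.2 Set.self_mem_Ici hs (sub_nonneg.2 hc1) hc0 (by ring)
  simpa [hG.2.2.2.1, smul_eq_mul] using h

lemma orlicz_pointwise {G Gt : ℝ → ℝ} (hG : IsOrliczFunction G) (hGt : IsOrliczFunction Gt)
    (h1 : ∀ t : ℝ, 0 ≤ t → G t ≤ 1 → G t ≤ Gt t)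
    {s c : ℝ} (hs : 0 ≤ s) (hGts : Gt s ≤ 1) (hc0 : 0 < c) (hc1 : c < 1) :
    G (c * s) ≤ Gt s := by
  have hcs : 0 ≤ c * s := mul_nonneg hc0.le hs
  by_cases h : G (c * s) ≤ 1
  · calc G (c * s) ≤ Gt (c * s) := h1 _ hcs h
      _ ≤ Gt s := hGt.2.2.1 hcs hs (mul_le_of_le_one_left hs hc1.le)
  · exfalso
    push_neg at h
    have hsub : Set.Icc (0:ℝ) (c*s) ⊆ Set.Ici 0 := fun y hy => hy.1
    have hivt := intermediate_value_Icc hcs (hG.1.mono hsub)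
    have h1mem : (1:ℝ) ∈ Set.Icc (G 0) (G (c*s)) := by
      rw [hG.2.2.2.1]; exact ⟨zero_le_one, h.le⟩
    obtain ⟨s', hs'mem, hs'⟩ := hivt h1mem
    have hs'0 : 0 ≤ s' := hs'mem.1
    have hge : (1:ℝ) ≤ Gt (c*s) := by
      calc (1:ℝ) = G s' := hs'.symm
        _ ≤ Gt s' := h1 _ hs'0 (le_of_eq hs')
        _ ≤ Gt (c*s) := hGt.2.2.1 hs'0 hcs hs'mem.2
    have hscale : Gt (c*s) ≤ c * Gt s := orlicz_scale hGt hs hc0.le hc1.le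
    nlinarith

lemma orlicz_set_nonempty {n : ℕ} (hn : 1 ≤ n) {G : ℝ → ℝ} (hG : IsOrliczFunction G)
    (x : Fin n → ℝ) (hx : 0 ≤ x) :
    {α : ℝ | 0 < α ∧ ∑ i, G (x i / α) ≤ 1}.Nonempty := by
  have hnR : (0:ℝ) < n := by exact_mod_cast hn
  have hcont : ContinuousWithinAt G (Set.Ici 0) 0 := hG.1 0 Set.self_mem_Ici
  rw [Metric.continuousWithinAt_iff] at hcont
  obtain ⟨δ, hδ, hδ'⟩ := hcont (1/n) (by positivity)
  set S := ∑ i, x i with hSdef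
  have hS : 0 ≤ S := Finset.sum_nonneg fun i _ => hx i
  refine ⟨2 * (S + 1) / δ, by positivity, ?_⟩
  have hterm : ∀ i, G (x i / (2 * (S + 1) / δ)) ≤ 1 / n := by
    intro i
    have hxi : 0 ≤ x i := hx i
    have hle : x i ≤ S := Finset.single_le_sum (fun j _ => hx j) (Finset.mem_univ i)
    have h0 : 0 ≤ x i / (2 * (S + 1) / δ) := by positivity
    have hlt : x i / (2 * (S + 1) / δ) < δ := by
      rw [div_lt_iff₀ (by positivity)]
      have : 2 * (S + 1) / δ * δ = 2 * (S + 1) := by field_simp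
      nlinarith
    have hd := hδ' h0 (by rw [Real.dist_eq, sub_zero, abs_of_nonneg h0]; exact hlt)
    rw [Real.dist_eq, hG.2.2.2.1, sub_zero] at hd
    calc G (x i / (2 * (S + 1) / δ)) ≤ |G (x i / (2 * (S + 1) / δ))| := le_abs_self _
      _ ≤ 1/n := hd.le
  calc ∑ i, G (x i / (2 * (S + 1) / δ)) ≤ ∑ _i : Fin n, 1/(n:ℝ) :=
        Finset.sum_le_sum fun i _ => hterm i
    _ = 1 := by
        rw [Finset.sum_const, Finset.card_univ, Fintype.card_fin, nsmul_eq_mul]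
        field_simp

/-- If `G̃ ≥ G` and `G̃(t/γ) ≤ α·G(t) + 1/n` whenever `G(t) ≤ 1`, then
`‖x‖_G ≤ ‖x‖_{G̃} ≤ γ(α+1)·‖x‖_G` for all nonnegative `x`. -/
theorem orliczNorm_comparison {n : ℕ} (hn : 1 ≤ n)
    (G Gt : ℝ → ℝ) (hG : IsOrliczFunction G) (hGt : IsOrliczFunction Gt)
    (α γ : ℝ) (hα : 0 ≤ α) (hγ : 1 ≤ γ)
    (h1 : ∀ t : ℝ, 0 ≤ t → G t ≤ 1 → G t ≤ Gt t)
    (h2 : ∀ t : ℝ, 0 ≤ t → G t ≤ 1 → Gt (t / γ) ≤ α * G t + 1 / n) :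
    ∀ x : Fin n → ℝ, 0 ≤ x →
      orliczNorm G x ≤ orliczNorm Gt x ∧
      orliczNorm Gt x ≤ γ * (α + 1) * orliczNorm G x := by
  intro x hx
  unfold orliczNorm
  set SG := {α : ℝ | 0 < α ∧ ∑ i, G (x i / α) ≤ 1} with hSGdef
  set SGt := {α : ℝ | 0 < α ∧ ∑ i, Gt (x i / α) ≤ 1} with hSGtdef
  have hbddG : BddBelow SG := ⟨0, fun a ha => ha.1.le⟩
  have hbddGt : BddBelow SGt := ⟨0, fun a ha => ha.1.le⟩
  have hneG : SG.Nonempty := orlicz_set_nonempty hn hG x hx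
  have hneGt : SGt.Nonempty := orlicz_set_nonempty hn hGt x hx
  have hnR : (0:ℝ) < n := by exact_mod_cast hn
  have hγ0 : (0:ℝ) < γ := by linarith
  have hα1 : (0:ℝ) < α + 1 := by linarith
  -- first inequality
  have key1 : ∀ β ∈ SGt, ∀ lam : ℝ, 1 < lam → lam * β ∈ SG := by
    intro β hβ lam hlam
    obtain ⟨hβ0, hβsum⟩ := hβ
    have hlam0 : (0:ℝ) < lam := by linarith
    refine ⟨by positivity, ?_⟩
    have hterm : ∀ i, G (x i / (lam * β)) ≤ Gt (x i / β) := by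
      intro i
      have hs : 0 ≤ x i / β := div_nonneg (hx i) hβ0.le
      have hGts : Gt (x i / β) ≤ 1 :=
        le_trans (Finset.single_le_sum
          (fun j _ => orlicz_nonneg hGt (div_nonneg (hx j) hβ0.le)) (Finset.mem_univ i)) hβsum
      have heq : x i / (lam * β) = (1/lam) * (x i / β) := by
        field_simp
      rw [heq]
      exact orlicz_pointwise hG hGt h1 hs hGts (by positivity)
        ((div_lt_one hlam0).mpr hlam)
    calc ∑ i, G (x i / (lam*β)) ≤ ∑ i, Gt (x i / β) := Finset.sum_le_sum fun i _ => hterm i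
      _ ≤ 1 := hβsum
  have ineq1 : sInf SG ≤ sInf SGt := by
    apply le_csInf hneGt
    intro β hβ
    apply le_of_forall_pos_le_add
    intro ε hε
    have hβ0 := hβ.1
    have hlam : 1 < (β + ε)/β := by rw [lt_div_iff₀ hβ0]; linarith
    calc sInf SG ≤ (β+ε)/β * β := csInf_le hbddG (key1 β hβ _ hlam)
      _ = β + ε := by field_simp
  -- second inequality
  have key2 : ∀ β ∈ SG, γ * (α + 1) * β ∈ SGt := by
    intro β hβ
    obtain ⟨hβ0, hβsum⟩ := hβ
    refine ⟨by positivity, ?_⟩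
    have hterm : ∀ i, Gt (x i / (γ * (α+1) * β)) ≤ (1/(α+1)) * (α * G (x i / β) + 1/n) := by
      intro i
      have hs : 0 ≤ x i / β := div_nonneg (hx i) hβ0.le
      have hGle : G (x i / β) ≤ 1 :=
        le_trans (Finset.single_le_sum
          (fun j _ => orlicz_nonneg hG (div_nonneg (hx j) hβ0.le)) (Finset.mem_univ i)) hβsum
      have h2i := h2 _ hs hGle
      have heq : x i / (γ*(α+1)*β) = (1/(α+1)) * ((x i / β)/γ) := by
        rw [one_div_mul_eq_div, div_div, div_div]
        ring_nf
      rw [heq]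
      calc Gt ((1/(α+1)) * ((x i / β)/γ)) ≤ (1/(α+1)) * Gt ((x i / β)/γ) :=
            orlicz_scale hGt (by positivity) (by positivity)
              (by rw [div_le_one hα1]; linarith)
        _ ≤ (1/(α+1)) * (α * G (x i /β) + 1/n) :=
            mul_le_mul_of_nonneg_left h2i (by positivity)
    calc ∑ i, Gt (x i / (γ*(α+1)*β))
        ≤ ∑ i, (1/(α+1)) * (α * G (x i / β) + 1/n) := Finset.sum_le_sum fun i _ => hterm i
      _ = (1/(α+1)) * (α * (∑ i, G (x i / β)) + 1) := by
          rw [← Finset.mul_sum]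
          congr 1
          rw [Finset.sum_add_distrib, ← Finset.mul_sum, Finset.sum_const,
            Finset.card_univ, Fintype.card_fin, nsmul_eq_mul]
          congr 1
          rw [mul_one_div, div_self (ne_of_gt hnR)]
      _ ≤ (1/(α+1)) * (α * 1 + 1) := by
          apply mul_le_mul_of_nonneg_left _ (by positivity)
          have := mul_le_mul_of_nonneg_left hβsum hα
          linarith
      _ = 1 := by
          have h' : α * 1 + 1 = α + 1 := by ring
          rw [h', one_div_mul_cancel (ne_of_gt hα1)]
  have ineq2 : sInf SGt ≤ γ * (α + 1) * sInf SG := by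
    have hc : (0:ℝ) < γ * (α+1) := by positivity
    rw [← div_le_iff₀' hc]
    apply le_csInf hneG
    intro β hβ
    rw [div_le_iff₀ hc]
    calc sInf SGt ≤ γ*(α+1)*β := csInf_le hbddGt (key2 β hβ)
      _ = β * (γ*(α+1)) := by ring
  exact ⟨ineq1, ineq2⟩
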